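/- Let n ≥ 1, m ≥ 1, p ≥ 0, q ≥ 0 with p + q > 1, and r ≥ 0, s ≥ 0 be integers, and for such parameters define V(n,p,q,r,s,m) := ∑_{j=1}^{n} H_{j,m}^2 / ((j+r)^p (j+s)^q) (a real number). Then the following recursive relations hold. (i) If q = 0, then V(n,p,0,r,s,m) = ∑_{j=1}^{n+r} H_{j,m}^2/j^p − ∑_{j=1}^{r} H_{j,m}^2/j^p − 2 ∑_{i=1}^{r} ∑_{j=1}^{n} H_{j,m}/((j+r)^p (j+i)^m) + ∑_{i=1}^{r} ∑_{j=1}^{n} 1/((j+r)^p (j+i)^{2m}) − 2 ∑_{i=1}^{r} ∑_{k=1}^{r} ∑_{j=1}^{n} 1/((j+r)^p (j+i)^m (j+k)^m) + 2 ∑_{i₁=1}^{r−1} ∑_{i₂=i₁+1}^{r} ∑_{j=1}^{n} 1/((j+r)^p (j+i₁)^m (j+i₂)^m). (ii) If p > q and r ≠ s, then V(n,p,q,r,s,m) = (1/(s−r)^q) ∑_{i=0}^{q} (−1)^i binom(q,i) V(n,p−i,i,r,s,m). (iii) If q > p and r ≠ s, then V(n,p,q,r,s,m) = (1/(r−s)^p)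 ∑_{i=0}^{p} (−1)^i binom(p,i) V(n,i,q−i,r,s,m). -/
import Mathlib


open Finset Filter Real Topology

/-- Generalized harmonic number `H (n, m) = ∑_{i=1}^{n} 1/i^m` as a real number. -/
noncomputable def H (n m : ℕ) : ℝ := ∑ i ∈ Finset.Icc 1 n, (1 : ℝ) / (i : ℝ) ^ m

/-- Apéry's constant `ζ(3) = ∑_{k=1}^{∞} 1/k³`. -/
noncomputable def zeta3 : ℝ := ∑' k : ℕ, 1 / ((k : ℝ) + 1) ^ 3

/-- `V (n,p,q,r,s,m) = ∑_{j=1}^{n} H_{j,m}² / ((j+r)^p (j+s)^q)`. -/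
noncomputable def V (n p q r s m : ℕ) : ℝ :=
  ∑ j ∈ Finset.Icc 1 n, (H j m) ^ 2 / (((j : ℝ) + r) ^ p * ((j : ℝ) + s) ^ q)

lemma Hsucc (k m : ℕ) : H (k+1) m = H k m + 1/((k:ℝ)+1)^m := by
  unfold H
  rw [Finset.sum_Icc_succ_top (by omega)]
  push_cast; ring

lemma shiftH (j r m : ℕ) :
    H (j + r) m = H j m + ∑ i ∈ Finset.Icc 1 r, (1:ℝ)/((j:ℝ)+(i:ℝ))^m := by
  induction r with
  | zero => simp
  | succ r ih =>
      rw [← add_assoc, Hsucc, ih, Finset.sum_Icc_succ_top (by omega)]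
      push_cast; ring

lemma sum_shift (n r : ℕ) (f : ℕ → ℝ) :
    ∑ j ∈ Finset.Icc 1 (n+r), f j - ∑ j ∈ Finset.Icc 1 r, f j
      = ∑ j ∈ Finset.Icc 1 n, f (j + r) := by
  induction n with
  | zero => simp
  | succ n ih =>
      have h1 : n + 1 + r = (n + r) + 1 := by omega
      rw [h1, Finset.sum_Icc_succ_top (by omega),
        Finset.sum_Icc_succ_top (show 1 ≤ n+1 by omega)]
      have h2 : n + 1 + r = n + r + 1 := by omega
      rw [h2]
      linarith [ih]

lemma off_ext (r : ℕ) (f : ℕ → ℕ → ℝ) :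
    ∑ i ∈ Finset.Icc 1 (r-1), ∑ k ∈ Finset.Icc (i+1) r, f i k
      = ∑ i ∈ Finset.Icc 1 r, ∑ k ∈ Finset.Icc (i+1) r, f i k := by
  apply Finset.sum_subset
  · apply Finset.Icc_subset_Icc_right; omega
  · intro x hx hx'
    have : Finset.Icc (x+1) r = ∅ := by
      apply Finset.Icc_eq_empty
      simp [Finset.mem_Icc] at hx hx'; omega
    simp [this]

lemma sym_sum (r : ℕ) (f : ℕ → ℕ → ℝ) (hf : ∀ i k, f i k = f k i) :
    ∑ i ∈ Finset.Icc 1 r, ∑ k ∈ Finset.Icc 1 r, f i k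
      = ∑ i ∈ Finset.Icc 1 r, f i i
        + 2 * ∑ i ∈ Finset.Icc 1 (r-1), ∑ k ∈ Finset.Icc (i+1) r, f i k := by
  rw [off_ext]
  induction r with
  | zero => simp
  | succ r ih =>
      rw [Finset.sum_Icc_succ_top (show 1 ≤ r+1 by omega),
          Finset.sum_Icc_succ_top (show 1 ≤ r+1 by omega),
          Finset.sum_Icc_succ_top (show 1 ≤ r+1 by omega)]
      have e1 : ∀ i ∈ Finset.Icc 1 r, ∑ k ∈ Finset.Icc 1 (r+1), f i k
          = (∑ k ∈ Finset.Icc 1 r, f i k) + f i (r+1) :=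
        fun i _ => Finset.sum_Icc_succ_top (by omega) _
      rw [Finset.sum_congr rfl e1, Finset.sum_Icc_succ_top (show 1 ≤ r+1 by omega)]
      have e2 : ∀ i ∈ Finset.Icc 1 r, ∑ k ∈ Finset.Icc (i+1) (r+1), f i k
          = (∑ k ∈ Finset.Icc (i+1) r, f i k) + f i (r+1) := by
        intro i hi
        exact Finset.sum_Icc_succ_top (by simp [Finset.mem_Icc] at hi; omega) _
      rw [Finset.sum_congr rfl e2]
      have e3 : Finset.Icc (r+1+1) (r+1) = ∅ := Finset.Icc_eq_empty (by omega)
      rw [e3]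
      have e4 : ∑ k ∈ Finset.Icc 1 r, f (r+1) k = ∑ i ∈ Finset.Icc 1 r, f i (r+1) :=
        Finset.sum_congr rfl fun i _ => hf _ _
      rw [Finset.sum_add_distrib, Finset.sum_add_distrib, ih, e4, Finset.sum_empty]
      ring

lemma key2 (p q : ℕ) (h : q ≤ p) (a b c : ℝ) (ha : a ≠ 0) (hb : b ≠ 0) (hab : b - a ≠ 0) :
    c / (a^p * b^q)
      = 1/(b-a)^q * ∑ i ∈ Finset.range (q+1),
          (-1:ℝ)^i * (q.choose i : ℝ) * (c / (a^(p-i) * b^i)) := by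
  have key : ∀ i ∈ Finset.range (q+1),
      (-1:ℝ)^i * (q.choose i : ℝ) * (c / (a^(p-i) * b^i))
        = c / (a^p * b^q) * ((-a)^i * b^(q-i) * (q.choose i : ℝ)) := by
    intro i hi
    have hi' : i ≤ q := Nat.lt_succ_iff.mp (Finset.mem_range.mp hi)
    have h1 : a ^ (p - i) * a ^ i = a ^ p := pow_sub_mul_pow a (le_trans hi' h)
    have h2 : b ^ i * b ^ (q - i) = b ^ q := pow_mul_pow_sub b hi'
    rw [← h1, ← h2, neg_pow]
    have hai : (a:ℝ)^i ≠ 0 := pow_ne_zero _ ha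
    have hapi : (a:ℝ)^(p-i) ≠ 0 := pow_ne_zero _ ha
    have hbi : (b:ℝ)^i ≠ 0 := pow_ne_zero _ hb
    have hbqi : (b:ℝ)^(q-i) ≠ 0 := pow_ne_zero _ hb
    field_simp
    ring
  rw [Finset.sum_congr rfl key, ← Finset.mul_sum, ← add_pow]
  have e : -a + b = b - a := by ring
  rw [e]
  have : ((b-a):ℝ)^q ≠ 0 := pow_ne_zero _ hab
  field_simp

lemma pointwise (p r m j : ℕ) :
    (H j m)^2 / ((j:ℝ)+(r:ℝ))^p =
      (H (j+r) m)^2 / ((j:ℝ)+(r:ℝ))^p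
      - 2 * ∑ i ∈ Finset.Icc 1 r, H j m / (((j:ℝ)+r)^p * ((j:ℝ)+i)^m)
      + ∑ i ∈ Finset.Icc 1 r, 1 / (((j:ℝ)+r)^p * ((j:ℝ)+i)^(2*m))
      - 2 * ∑ i ∈ Finset.Icc 1 r, ∑ k ∈ Finset.Icc 1 r,
          1 / (((j:ℝ)+r)^p * ((j:ℝ)+i)^m * ((j:ℝ)+k)^m)
      + 2 * ∑ i₁ ∈ Finset.Icc 1 (r-1), ∑ i₂ ∈ Finset.Icc (i₁+1) r,
          1 / (((j:ℝ)+r)^p * ((j:ℝ)+i₁)^m * ((j:ℝ)+i₂)^m) := by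
  set x : ℝ := (j:ℝ) with hx
  set P : ℝ := (x + r)^p with hP
  set c : ℕ → ℝ := fun i => (x + (i:ℝ))^m with hc
  have eB : ∀ i ∈ Finset.Icc 1 r, H j m / (P * c i) = H j m / P * (1 / c i) := by
    intro i _; rw [div_mul_eq_div_div, div_eq_mul_one_div]
  have eC : ∀ i ∈ Finset.Icc 1 r, (1:ℝ) / (P * (x+(i:ℝ))^(2*m)) = 1/P * (1/c i * (1/c i)) := by
    intro i _
    have : (x+(i:ℝ))^(2*m) = c i * c i := by rw [hc]; rw [two_mul, pow_add]
    rw [this, one_div_mul_one_div, one_div_mul_one_div]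
  have eD : ∀ i ∈ Finset.Icc 1 r, ∀ k ∈ Finset.Icc 1 r,
      (1:ℝ) / (P * c i * c k) = 1/P * (1/c i * (1/c k)) := by
    intro i _ k _
    rw [mul_assoc, one_div_mul_one_div, one_div_mul_one_div]
  have eE : ∀ i ∈ Finset.Icc 1 (r-1), ∀ k ∈ Finset.Icc (i+1) r,
      (1:ℝ) / (P * c i * c k) = 1/P * (1/c i * (1/c k)) := by
    intro i _ k _
    rw [mul_assoc, one_div_mul_one_div, one_div_mul_one_div]
  rw [Finset.sum_congr rfl eB, Finset.sum_congr rfl eC,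
    Finset.sum_congr rfl (fun i hi => Finset.sum_congr rfl (eD i hi)),
    Finset.sum_congr rfl (fun i hi => Finset.sum_congr rfl (eE i hi)),
    ← Finset.mul_sum, ← Finset.mul_sum]
  have eD2 : ∀ i ∈ Finset.Icc 1 r,
      ∑ k ∈ Finset.Icc 1 r, 1/P * (1/c i * (1/c k))
        = 1/P * ∑ k ∈ Finset.Icc 1 r, (1/c i * (1/c k)) := by
    intro i _; rw [Finset.mul_sum]
  have eE2 : ∀ i ∈ Finset.Icc 1 (r-1),
      ∑ k ∈ Finset.Icc (i+1) r, 1/P * (1/c i * (1/c k))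
        = 1/P * ∑ k ∈ Finset.Icc (i+1) r, (1/c i * (1/c k)) := by
    intro i _; rw [Finset.mul_sum]
  rw [Finset.sum_congr rfl eD2, Finset.sum_congr rfl eE2, ← Finset.mul_sum, ← Finset.mul_sum]
  set u : ℝ := ∑ i ∈ Finset.Icc 1 r, 1 / c i with hu
  have hH : H (j+r) m = H j m + u := by
    rw [shiftH, hu, hc]
  rw [hH]
  have hsym := sym_sum r (fun i k => 1/c i * (1/c k)) (fun i k => by ring)
  have hmul : u * u = ∑ i ∈ Finset.Icc 1 r, ∑ k ∈ Finset.Icc 1 r, (1/c i * (1/c k)) := by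
    rw [hu, Finset.sum_mul_sum]
  linear_combination (-(1/P)) * hmul + (1/P) * hsym

theorem recursion_for_V (n p q r s m : ℕ) (hn : 1 ≤ n) (hm : 1 ≤ m) (hpq : 1 < p + q) :
    (q = 0 →
      V n p 0 r s m =
        (∑ j ∈ Finset.Icc 1 (n + r), (H j m) ^ 2 / (j : ℝ) ^ p)
          - (∑ j ∈ Finset.Icc 1 r, (H j m) ^ 2 / (j : ℝ) ^ p)
          - 2 * ∑ i ∈ Finset.Icc 1 r, ∑ j ∈ Finset.Icc 1 n,
              H j m / (((j : ℝ) + r) ^ p * ((j : ℝ) + i) ^ m)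
          + ∑ i ∈ Finset.Icc 1 r, ∑ j ∈ Finset.Icc 1 n,
              1 / (((j : ℝ) + r) ^ p * ((j : ℝ) + i) ^ (2 * m))
          - 2 * ∑ i ∈ Finset.Icc 1 r, ∑ k ∈ Finset.Icc 1 r, ∑ j ∈ Finset.Icc 1 n,
              1 / (((j : ℝ) + r) ^ p * ((j : ℝ) + i) ^ m * ((j : ℝ) + k) ^ m)
          + 2 * ∑ i₁ ∈ Finset.Icc 1 (r - 1), ∑ i₂ ∈ Finset.Icc (i₁ + 1) r,
              ∑ j ∈ Finset.Icc 1 n,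
              1 / (((j : ℝ) + r) ^ p * ((j : ℝ) + i₁) ^ m * ((j : ℝ) + i₂) ^ m)) ∧
    (p > q → r ≠ s →
      V n p q r s m =
        (1 / ((s : ℝ) - (r : ℝ)) ^ q) *
          ∑ i ∈ Finset.range (q + 1),
            (-1 : ℝ) ^ i * (q.choose i : ℝ) * V n (p - i) i r s m) ∧
    (q > p → r ≠ s →
      V n p q r s m =
        (1 / ((r : ℝ) - (s : ℝ)) ^ p) *
          ∑ i ∈ Finset.range (p + 1),
            (-1 : ℝ) ^ i * (p.choose i : ℝ) * V n i (q - i) r s m) := by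
  refine ⟨fun hq => ?_, fun hpq' hrs => ?_, fun hpq' hrs => ?_⟩
  · -- part (i)
    unfold V
    simp only [pow_zero, mul_one]
    rw [sum_shift n r (fun j => (H j m) ^ 2 / (j : ℝ) ^ p)]
    have h3 : ∑ i ∈ Finset.Icc 1 r, ∑ j ∈ Finset.Icc 1 n,
        H j m / (((j : ℝ) + r) ^ p * ((j : ℝ) + i) ^ m)
        = ∑ j ∈ Finset.Icc 1 n, ∑ i ∈ Finset.Icc 1 r,
          H j m / (((j : ℝ) + r) ^ p * ((j : ℝ) + i) ^ m) := Finset.sum_comm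
    have h4 : ∑ i ∈ Finset.Icc 1 r, ∑ j ∈ Finset.Icc 1 n,
        (1:ℝ) / (((j : ℝ) + r) ^ p * ((j : ℝ) + i) ^ (2 * m))
        = ∑ j ∈ Finset.Icc 1 n, ∑ i ∈ Finset.Icc 1 r,
          (1:ℝ) / (((j : ℝ) + r) ^ p * ((j : ℝ) + i) ^ (2 * m)) := Finset.sum_comm
    have h5 : ∑ i ∈ Finset.Icc 1 r, ∑ k ∈ Finset.Icc 1 r, ∑ j ∈ Finset.Icc 1 n,
        (1:ℝ) / (((j : ℝ) + r) ^ p * ((j : ℝ) + i) ^ m * ((j : ℝ) + k) ^ m)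
        = ∑ j ∈ Finset.Icc 1 n, ∑ i ∈ Finset.Icc 1 r, ∑ k ∈ Finset.Icc 1 r,
          (1:ℝ) / (((j : ℝ) + r) ^ p * ((j : ℝ) + i) ^ m * ((j : ℝ) + k) ^ m) := by
      rw [show (∑ i ∈ Finset.Icc 1 r, ∑ k ∈ Finset.Icc 1 r, ∑ j ∈ Finset.Icc 1 n,
          (1:ℝ) / (((j : ℝ) + r) ^ p * ((j : ℝ) + i) ^ m * ((j : ℝ) + k) ^ m))
        = ∑ i ∈ Finset.Icc 1 r, ∑ j ∈ Finset.Icc 1 n, ∑ k ∈ Finset.Icc 1 r,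
          (1:ℝ) / (((j : ℝ) + r) ^ p * ((j : ℝ) + i) ^ m * ((j : ℝ) + k) ^ m)
        from Finset.sum_congr rfl fun i _ => Finset.sum_comm]
      exact Finset.sum_comm
    have h6 : ∑ i₁ ∈ Finset.Icc 1 (r-1), ∑ i₂ ∈ Finset.Icc (i₁+1) r, ∑ j ∈ Finset.Icc 1 n,
        (1:ℝ) / (((j : ℝ) + r) ^ p * ((j : ℝ) + i₁) ^ m * ((j : ℝ) + i₂) ^ m)
        = ∑ j ∈ Finset.Icc 1 n, ∑ i₁ ∈ Finset.Icc 1 (r-1), ∑ i₂ ∈ Finset.Icc (i₁+1) r,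
          (1:ℝ) / (((j : ℝ) + r) ^ p * ((j : ℝ) + i₁) ^ m * ((j : ℝ) + i₂) ^ m) := by
      rw [show (∑ i₁ ∈ Finset.Icc 1 (r-1), ∑ i₂ ∈ Finset.Icc (i₁+1) r, ∑ j ∈ Finset.Icc 1 n,
          (1:ℝ) / (((j : ℝ) + r) ^ p * ((j : ℝ) + i₁) ^ m * ((j : ℝ) + i₂) ^ m))
        = ∑ i₁ ∈ Finset.Icc 1 (r-1), ∑ j ∈ Finset.Icc 1 n, ∑ i₂ ∈ Finset.Icc (i₁+1) r,
          (1:ℝ) / (((j : ℝ) + r) ^ p * ((j : ℝ) + i₁) ^ m * ((j : ℝ) + i₂) ^ m)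
        from Finset.sum_congr rfl fun i _ => Finset.sum_comm]
      exact Finset.sum_comm
    rw [h3, h4, h5, h6, Finset.mul_sum, Finset.mul_sum, Finset.mul_sum]
    simp only [← Finset.sum_sub_distrib, ← Finset.sum_add_distrib]
    refine Finset.sum_congr rfl fun j hj => ?_
    have hpt := pointwise p r m j
    push_cast
    linarith [hpt]
  · -- part (ii)
    unfold V
    have e1 : ∀ i ∈ Finset.range (q+1),
        (-1 : ℝ) ^ i * (q.choose i : ℝ) *
          ∑ j ∈ Finset.Icc 1 n, (H j m) ^ 2 / (((j : ℝ) + r) ^ (p-i) * ((j : ℝ) + s) ^ i)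
        = ∑ j ∈ Finset.Icc 1 n, (-1 : ℝ) ^ i * (q.choose i : ℝ) *
            ((H j m) ^ 2 / (((j : ℝ) + r) ^ (p-i) * ((j : ℝ) + s) ^ i)) :=
      fun i _ => Finset.mul_sum _ _ _
    rw [Finset.sum_congr rfl e1, Finset.sum_comm, Finset.mul_sum]
    refine Finset.sum_congr rfl fun j hj => ?_
    have hj1 : 1 ≤ j := (Finset.mem_Icc.mp hj).1
    have hx : (1:ℝ) ≤ (j:ℝ) := by exact_mod_cast hj1
    have ha : ((j:ℝ) + r) ≠ 0 := by positivity
    have hb : ((j:ℝ) + s) ≠ 0 := by positivity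
    have hab : ((j:ℝ) + s) - ((j:ℝ) + r) ≠ 0 := by
      have : (r:ℝ) ≠ (s:ℝ) := by exact_mod_cast hrs
      intro hc; apply this; linarith
    have hk := key2 p q hpq'.le ((j:ℝ)+r) ((j:ℝ)+s) ((H j m)^2) ha hb hab
    rw [hk]
    congr 2
    ring
  · -- part (iii)
    unfold V
    have e1 : ∀ i ∈ Finset.range (p+1),
        (-1 : ℝ) ^ i * (p.choose i : ℝ) *
          ∑ j ∈ Finset.Icc 1 n, (H j m) ^ 2 / (((j : ℝ) + r) ^ i * ((j : ℝ) + s) ^ (q-i))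
        = ∑ j ∈ Finset.Icc 1 n, (-1 : ℝ) ^ i * (p.choose i : ℝ) *
            ((H j m) ^ 2 / (((j : ℝ) + r) ^ i * ((j : ℝ) + s) ^ (q-i))) :=
      fun i _ => Finset.mul_sum _ _ _
    rw [Finset.sum_congr rfl e1, Finset.sum_comm, Finset.mul_sum]
    refine Finset.sum_congr rfl fun j hj => ?_
    have hj1 : 1 ≤ j := (Finset.mem_Icc.mp hj).1
    have hx : (1:ℝ) ≤ (j:ℝ) := by exact_mod_cast hj1
    have ha : ((j:ℝ) + s) ≠ 0 := by positivity
    have hb : ((j:ℝ) + r) ≠ 0 := by positivity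
    have hab : ((j:ℝ) + r) - ((j:ℝ) + s) ≠ 0 := by
      have : (r:ℝ) ≠ (s:ℝ) := by exact_mod_cast hrs
      intro hc; apply this; linarith
    have hk := key2 q p hpq'.le ((j:ℝ)+s) ((j:ℝ)+r) ((H j m)^2) ha hb hab
    rw [mul_comm (((j:ℝ) + r) ^ p) (((j:ℝ) + s) ^ q), hk]
    have e2 : ((j:ℝ) + r) - ((j:ℝ) + s) = (r:ℝ) - (s:ℝ) := by ring
    rw [e2]
    congr 1
    refine Finset.sum_congr rfl fun i _ => ?_
    rw [mul_comm (((j:ℝ) + s) ^ (q-i)) (((j:ℝ) + r) ^ i)]
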